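/- Let X be an obtuse random variable in ℂ^N with tensor S and canonical isometric isomorphism W_X: L²(Ω) → ℂ^{N+1} sending X^i to eᵢ. Then W_X M_{X^i} W_X* = Σ_{j,k=0}^N S^{ij}_k a^j_k, where M_{X^i} is the multiplication operator by X^i on L²(Ω) and a^j_k e_l = δ_{j,l} e_k. -/

import Mathlib

/-- multiplication operator representation. On the canonical
space `Ω = Fin (N+1)` with `P({ω}) = p_ω = 1/(1+‖v_ω‖²)`, the canonical
isomorphism `W_X : L²(Ω) → ℂ^{N+1}`, `X^k ↦ e_k`, has matrix
`W_{kω} = p_ω conj(X^k(ω))`, its adjoint has matrix `(W*)_{ωk} = X^k(ω)`, and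
the multiplication operator `M_{X^i}` is the diagonal matrix `diag(X^i(ω))`.
The claim `W_X M_{X^i} W_X* = ∑_{j,k} S^{ij}_k a^j_k` becomes the matrix
identity below, where `a^j_k = stdBasisMatrix k j 1` (i.e. `a^j_k e_l = δ_{jl} e_k`). -/
theorem stmt18 {N : ℕ} (v : Fin (N + 1) → EuclideanSpace ℂ (Fin N))
    (hv : ∀ i j, i ≠ j → (inner ℂ (v i) (v j) : ℂ) = -1)
    (X : Fin (N + 1) → Fin (N + 1) → ℂ)
    (hX0 : ∀ ω, X 0 ω = 1)
    (hXs : ∀ (j : Fin N) (ω), X j.succ ω = v ω j)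
    (S : Fin (N + 1) → Fin (N + 1) → Fin (N + 1) → ℂ)
    (hS : ∀ i j k, S i j k =
      ∑ ω, ((1 / (1 + ‖v ω‖ ^ 2) : ℝ) : ℂ) *
        (X i ω * X j ω * (starRingEnd ℂ) (X k ω))) :
    ∀ i : Fin (N + 1),
      (Matrix.of fun k ω => ((1 / (1 + ‖v ω‖ ^ 2) : ℝ) : ℂ) *
          (starRingEnd ℂ) (X k ω)) *
        (Matrix.diagonal fun ω => X i ω) *
        (Matrix.of fun ω k => X k ω) =
      ∑ j, ∑ k, S i j k • Matrix.single k j (1 : ℂ) := by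
  intro i
  ext a b
  simp only [Matrix.sum_apply, Matrix.smul_apply, Matrix.single,
    Matrix.of_apply, smul_eq_mul, mul_ite, mul_one, mul_zero, ite_and,
    Finset.sum_ite_eq', Finset.mem_univ, if_true]
  rw [hS]
  simp [Matrix.mul_apply, Matrix.diagonal]
  apply Finset.sum_congr rfl
  intro ω _
  ring
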